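/- For any utility function u mapping into [-1,1], any threshold t0 in [-1,1], and any monotone nondecreasing function h from [-1,1] to [-1,1], the utility risk of the direct decision rule exceeds the utility risk of the post-processed rule by at most twice the utility calibration error: R_util(v_u; t0) - R_util(h ∘ v_u; t0) ≤ 2·UC(f,u). -/

import Mathlib

open MeasureTheory Set Filter

private lemma bdd_integrable {Ω : Type*} [MeasurableSpace Ω] (μ : Measure Ω)
    [IsProbabilityMeasure μ] {f : Ω → ℝ} (hm : Measurable f) {M : ℝ}
    (hb : ∀ ω, |f ω| ≤ M) : Integrable f μ :=
  Integrable.mono' (integrable_const M) hm.aestronglyMeasurable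
    (Filter.Eventually.of_forall (fun ω => by simpa [Real.norm_eq_abs] using hb ω))

/-- Key lemma: for any order-connected subset `S` of `[-1,1]`, the calibration-type
integral over `S` is bounded by the sup over closed intervals. -/
private lemma key_lemma {Ω : Type*} [MeasurableSpace Ω] (μ : Measure Ω) [IsProbabilityMeasure μ]
    (uY v : Ω → ℝ)
    (huY : ∀ ω, uY ω ∈ Icc (-1 : ℝ) 1) (hv : ∀ ω, v ω ∈ Icc (-1 : ℝ) 1)
    (hmuY : Measurable uY) (hmv : Measurable v)
    (UC : ℝ)
    (hUC : UC = ⨆ I : {q : ℝ × ℝ // -1 ≤ q.1 ∧ q.1 ≤ q.2 ∧ q.2 ≤ 1},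
      |∫ ω, (uY ω - v ω) * (Icc I.1.1 I.1.2).indicator (fun _ => (1 : ℝ)) (v ω) ∂μ|)
    (S : Set ℝ) (hS : S.OrdConnected) (hSsub : S ⊆ Icc (-1 : ℝ) 1)
    (hSm : MeasurableSet S) :
    |∫ ω, (uY ω - v ω) * S.indicator (fun _ => (1 : ℝ)) (v ω) ∂μ| ≤ UC := by
  classical
  -- pointwise bound, valid for any set T
  have habs : ∀ (T : Set ℝ) (ω : Ω),
      |(uY ω - v ω) * T.indicator (fun _ => (1 : ℝ)) (v ω)| ≤ 2 := by
    intro T ω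
    have h1 : |uY ω - v ω| ≤ 2 := by
      have h2 := huY ω; have h3 := hv ω
      rw [mem_Icc] at h2 h3
      rw [abs_le]; constructor <;> linarith [h2.1, h2.2, h3.1, h3.2]
    have h2 : |T.indicator (fun _ => (1 : ℝ)) (v ω)| ≤ 1 := by
      by_cases hz : v ω ∈ T <;> simp [indicator_apply, hz]
    calc |(uY ω - v ω) * T.indicator (fun _ => (1 : ℝ)) (v ω)|
        = |uY ω - v ω| * |T.indicator (fun _ => (1 : ℝ)) (v ω)| := abs_mul _ _
      _ ≤ 2 * 1 := mul_le_mul h1 h2 (abs_nonneg _) (by norm_num)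
      _ = 2 := by norm_num
  have hbdd : BddAbove (range fun I : {q : ℝ × ℝ // -1 ≤ q.1 ∧ q.1 ≤ q.2 ∧ q.2 ≤ 1} =>
      |∫ ω, (uY ω - v ω) * (Icc I.1.1 I.1.2).indicator (fun _ => (1 : ℝ)) (v ω) ∂μ|) := by
    refine ⟨2, ?_⟩
    rintro x ⟨I, rfl⟩
    have := norm_integral_le_of_norm_le_const (μ := μ)
      (f := fun ω => (uY ω - v ω) * (Icc I.1.1 I.1.2).indicator (fun _ => (1 : ℝ)) (v ω))
      (C := 2) (Filter.Eventually.of_forall fun ω => by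
        simpa only [Real.norm_eq_abs] using habs (Icc I.1.1 I.1.2) ω)
    simpa [Real.norm_eq_abs] using this
  have hUCle : ∀ p : {q : ℝ × ℝ // -1 ≤ q.1 ∧ q.1 ≤ q.2 ∧ q.2 ≤ 1},
      |∫ ω, (uY ω - v ω) * (Icc p.1.1 p.1.2).indicator (fun _ => (1 : ℝ)) (v ω) ∂μ| ≤ UC := by
    intro p; rw [hUC]; exact le_ciSup hbdd p
  have hUC0 : 0 ≤ UC :=
    le_trans (abs_nonneg _) (hUCle ⟨(0, 0), by norm_num⟩)
  rcases S.eq_empty_or_nonempty with rfl | hne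
  · simpa using hUC0
  -- nonempty case
  set α := sInf S with hα
  set β := sSup S with hβ
  have hbb : BddBelow S := ⟨-1, fun x hx => (hSsub hx).1⟩
  have hba : BddAbove S := ⟨1, fun x hx => (hSsub hx).2⟩
  have hαβ : α ≤ β := csInf_le_csSup hne hbb hba
  have hIoo : Ioo α β ⊆ S := by
    intro z hz
    obtain ⟨x, hxS, hxz⟩ := exists_lt_of_csInf_lt hne hz.1
    obtain ⟨y, hyS, hzy⟩ := exists_lt_of_lt_csSup hne hz.2
    exact hS.out hxS hyS ⟨hxz.le, hzy.le⟩
  have heqcase : α = β → α ∈ S := by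
    intro heq
    obtain ⟨x, hx⟩ := hne
    have h1 : α ≤ x := csInf_le hbb hx
    have h2 : x ≤ β := le_csSup hba hx
    have hxα : x = α := le_antisymm (by rw [heq]; exact h2) h1
    rwa [hxα] at hx
  set m := (α + β) / 2 with hmdef
  set a : ℕ → ℝ := fun n => if α ∈ S then α else min (α + 1 / (n + 1)) m with hadef
  set b : ℕ → ℝ := fun n => if β ∈ S then β else max (β - 1 / (n + 1)) m with hbdef
  have hmem : ∀ n : ℕ, a n ∈ S ∧ b n ∈ S ∧ a n ≤ b n := by
    intro n
    have hpos : (0 : ℝ) < 1 / ((n : ℝ) + 1) := by positivity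
    by_cases hαS : α ∈ S <;> by_cases hβS : β ∈ S
    · refine ⟨?_, ?_, ?_⟩ <;> simp only [hadef, hbdef, if_pos hαS, if_pos hβS]
      exacts [hαS, hβS, hαβ]
    · have hlt : α < β :=
        lt_of_le_of_ne hαβ (fun he => hβS (he ▸ heqcase he))
      have hm1 : α < m := by rw [hmdef]; linarith
      have hm2 : m < β := by rw [hmdef]; linarith
      have hbS : b n ∈ S := by
        apply hIoo
        simp only [hbdef, if_neg hβS]
        exact ⟨lt_max_of_lt_right hm1, max_lt (by linarith) hm2⟩
      refine ⟨?_, hbS, ?_⟩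
      · simp only [hadef, if_pos hαS]; exact hαS
      · simp only [hadef, if_pos hαS]; exact csInf_le hbb hbS
    · have hlt : α < β :=
        lt_of_le_of_ne hαβ (fun he => hαS (heqcase he))
      have hm1 : α < m := by rw [hmdef]; linarith
      have hm2 : m < β := by rw [hmdef]; linarith
      have haS : a n ∈ S := by
        apply hIoo
        simp only [hadef, if_neg hαS]
        exact ⟨lt_min (by linarith) hm1, min_lt_of_right_lt hm2⟩
      refine ⟨haS, ?_, ?_⟩
      · simp only [hbdef, if_pos hβS]; exact hβS
      · simp only [hbdef, if_pos hβS]; exact le_csSup hba haS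
    · have hlt : α < β :=
        lt_of_le_of_ne hαβ (fun he => hαS (heqcase he))
      have hm1 : α < m := by rw [hmdef]; linarith
      have hm2 : m < β := by rw [hmdef]; linarith
      have haS : a n ∈ S := by
        apply hIoo
        simp only [hadef, if_neg hαS]
        exact ⟨lt_min (by linarith) hm1, min_lt_of_right_lt hm2⟩
      have hbS : b n ∈ S := by
        apply hIoo
        simp only [hbdef, if_neg hβS]
        exact ⟨lt_max_of_lt_right hm1, max_lt (by linarith) hm2⟩
      refine ⟨haS, hbS, ?_⟩
      simp only [hadef, hbdef, if_neg hαS, if_neg hβS]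
      exact le_trans (min_le_right _ _) (le_max_right _ _)
  -- each approximant is bounded by UC
  have hFn_le : ∀ n : ℕ,
      |∫ ω, (uY ω - v ω) * (Icc (a n) (b n)).indicator (fun _ => (1 : ℝ)) (v ω) ∂μ| ≤ UC :=
    fun n => hUCle ⟨(a n, b n),
      ⟨(hSsub (hmem n).1).1, (hmem n).2.2, (hSsub (hmem n).2.1).2⟩⟩
  -- pointwise convergence
  have hconv : ∀ ω : Ω, Tendsto
      (fun n => (uY ω - v ω) * (Icc (a n) (b n)).indicator (fun _ => (1 : ℝ)) (v ω)) atTop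
      (nhds ((uY ω - v ω) * S.indicator (fun _ => (1 : ℝ)) (v ω))) := by
    intro ω
    by_cases hzS : v ω ∈ S
    · have haz : ∀ᶠ n : ℕ in atTop, a n ≤ v ω := by
        by_cases hαS : α ∈ S
        · refine Filter.Eventually.of_forall fun n => ?_
          simp only [hadef, if_pos hαS]
          exact csInf_le hbb hzS
        · have hzα : α < v ω :=
            lt_of_le_of_ne (csInf_le hbb hzS) (fun he => hαS (he ▸ hzS))
          have hev : ∀ᶠ n : ℕ in atTop, 1 / ((n : ℝ) + 1) < v ω - α :=
            tendsto_one_div_add_atTop_nhds_zero_nat.eventually_lt_const (by linarith)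
          filter_upwards [hev] with n hn
          simp only [hadef, if_neg hαS]
          exact le_trans (min_le_left _ _) (by linarith)
      have hbz : ∀ᶠ n : ℕ in atTop, v ω ≤ b n := by
        by_cases hβS : β ∈ S
        · refine Filter.Eventually.of_forall fun n => ?_
          simp only [hbdef, if_pos hβS]
          exact le_csSup hba hzS
        · have hzβ : v ω < β :=
            lt_of_le_of_ne (le_csSup hba hzS) (fun he => hβS (he ▸ hzS))
          have hev : ∀ᶠ n : ℕ in atTop, 1 / ((n : ℝ) + 1) < β - v ω :=
            tendsto_one_div_add_atTop_nhds_zero_nat.eventually_lt_const (by linarith)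
          filter_upwards [hev] with n hn
          refine le_trans ?_ (by simp only [hbdef, if_neg hβS]; exact le_max_left _ _)
          linarith
      refine Tendsto.congr' ?_ tendsto_const_nhds
      filter_upwards [haz, hbz] with n h1 h2
      simp [indicator_apply, hzS, mem_Icc, h1, h2]
    · have hzero : ∀ n : ℕ,
          (uY ω - v ω) * (Icc (a n) (b n)).indicator (fun _ => (1 : ℝ)) (v ω) = 0 := by
        intro n
        have hnot : v ω ∉ Icc (a n) (b n) := fun hmem' =>
          hzS (hS.out (hmem n).1 (hmem n).2.1 hmem')
        simp [indicator_apply, hnot]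
      have htgt : (uY ω - v ω) * S.indicator (fun _ => (1 : ℝ)) (v ω) = 0 := by
        simp [indicator_apply, hzS]
      rw [htgt]
      exact Tendsto.congr (fun n => (hzero n).symm) tendsto_const_nhds
  -- dominated convergence
  have hmeas : ∀ n : ℕ, AEStronglyMeasurable
      (fun ω => (uY ω - v ω) * (Icc (a n) (b n)).indicator (fun _ => (1 : ℝ)) (v ω)) μ := by
    intro n
    exact ((hmuY.sub hmv).mul
      ((measurable_const.indicator measurableSet_Icc).comp hmv)).aestronglyMeasurable
  have hdom := tendsto_integral_of_dominated_convergence (μ := μ)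
    (F := fun n ω => (uY ω - v ω) * (Icc (a n) (b n)).indicator (fun _ => (1 : ℝ)) (v ω))
    (f := fun ω => (uY ω - v ω) * S.indicator (fun _ => (1 : ℝ)) (v ω))
    (bound := fun _ => 2) hmeas (integrable_const 2)
    (fun n => Filter.Eventually.of_forall fun ω => by
      simpa only [Real.norm_eq_abs] using habs (Icc (a n) (b n)) ω)
    (Filter.Eventually.of_forall hconv)
  exact le_of_tendsto' hdom.abs hFn_le

/-- risk of thresholding the predicted utility minus the risk of any monotone
post-processing of it is at most twice the worst-interval utility calibration error. -/
theorem stmt_0 {Ω : Type*} [MeasurableSpace Ω] (μ : Measure Ω) [IsProbabilityMeasure μ]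
    (uY v : Ω → ℝ)
    (huY : ∀ ω, uY ω ∈ Icc (-1 : ℝ) 1) (hv : ∀ ω, v ω ∈ Icc (-1 : ℝ) 1)
    (hmuY : Measurable uY) (hmv : Measurable v)
    (UC : ℝ)
    (hUC : UC = ⨆ I : {q : ℝ × ℝ // -1 ≤ q.1 ∧ q.1 ≤ q.2 ∧ q.2 ≤ 1},
      |∫ ω, (uY ω - v ω) * (Icc I.1.1 I.1.2).indicator (fun _ => (1 : ℝ)) (v ω) ∂μ|)
    (t0 : ℝ) (ht0 : t0 ∈ Icc (-1 : ℝ) 1)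
    (h : ℝ → ℝ) (hmono : Monotone h) (hrange : ∀ z ∈ Icc (-1 : ℝ) 1, h z ∈ Icc (-1 : ℝ) 1) :
    (∫ ω, (t0 - uY ω) * ((if t0 ≤ v ω then (1 : ℝ) else 0) -
        (if t0 ≤ uY ω then (1 : ℝ) else 0)) ∂μ)
      - (∫ ω, (t0 - uY ω) * ((if t0 ≤ h (v ω) then (1 : ℝ) else 0) -
        (if t0 ≤ uY ω then (1 : ℝ) else 0)) ∂μ)
      ≤ 2 * UC := by
  classical
  have hhm : Measurable h := hmono.measurable
  set C : Set ℝ := {z | t0 ≤ z ∧ h z < t0} ∩ Icc (-1) 1 with hCdef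
  set D : Set ℝ := {z | z < t0 ∧ t0 ≤ h z} ∩ Icc (-1) 1 with hDdef
  have hCm : MeasurableSet C :=
    (((measurableSet_le measurable_const measurable_id).inter
      (measurableSet_lt hhm measurable_const))).inter measurableSet_Icc
  have hDm : MeasurableSet D :=
    (((measurableSet_lt measurable_id measurable_const).inter
      (measurableSet_le measurable_const hhm))).inter measurableSet_Icc
  have hCoc : C.OrdConnected := by
    refine OrdConnected.inter ⟨?_⟩ ordConnected_Icc
    rintro x ⟨hx1, hx2⟩ y ⟨hy1, hy2⟩ z ⟨hz1, hz2⟩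
    exact ⟨hx1.trans hz1, lt_of_le_of_lt (hmono hz2) hy2⟩
  have hDoc : D.OrdConnected := by
    refine OrdConnected.inter ⟨?_⟩ ordConnected_Icc
    rintro x ⟨hx1, hx2⟩ y ⟨hy1, hy2⟩ z ⟨hz1, hz2⟩
    exact ⟨lt_of_le_of_lt hz2 hy1, hx2.trans (hmono hz1)⟩
  have keyC := key_lemma μ uY v huY hv hmuY hmv UC hUC C hCoc inter_subset_right hCm
  have keyD := key_lemma μ uY v huY hv hmuY hmv UC hUC D hDoc inter_subset_right hDm
  -- abbreviations for measurability / integrability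
  have hmA : Measurable (fun ω => if t0 ≤ v ω then (1 : ℝ) else 0) :=
    Measurable.ite (measurableSet_le measurable_const hmv) measurable_const measurable_const
  have hmB : Measurable (fun ω => if t0 ≤ h (v ω) then (1 : ℝ) else 0) :=
    Measurable.ite (measurableSet_le measurable_const (hhm.comp hmv))
      measurable_const measurable_const
  have hmE : Measurable (fun ω => if t0 ≤ uY ω then (1 : ℝ) else 0) :=
    Measurable.ite (measurableSet_le measurable_const hmuY) measurable_const measurable_const
  have ht0u : ∀ ω, |t0 - uY ω| ≤ 2 := by
    intro ω
    have h2 := huY ω; rw [mem_Icc] at h2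
    rw [mem_Icc] at ht0
    rw [abs_le]; constructor <;> linarith [h2.1, h2.2, ht0.1, ht0.2]
  have hint1 : Integrable (fun ω => (t0 - uY ω) * ((if t0 ≤ v ω then (1 : ℝ) else 0) -
      (if t0 ≤ uY ω then (1 : ℝ) else 0))) μ := by
    refine bdd_integrable μ ((measurable_const.sub hmuY).mul (hmA.sub hmE)) (M := 2) ?_
    intro ω
    rw [abs_mul]
    calc |t0 - uY ω| * |(if t0 ≤ v ω then (1 : ℝ) else 0) - (if t0 ≤ uY ω then (1 : ℝ) else 0)|
        ≤ 2 * 1 := by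
          refine mul_le_mul (ht0u ω) ?_ (abs_nonneg _) (by norm_num)
          split_ifs <;> norm_num
      _ = 2 := by norm_num
  have hint2 : Integrable (fun ω => (t0 - uY ω) * ((if t0 ≤ h (v ω) then (1 : ℝ) else 0) -
      (if t0 ≤ uY ω then (1 : ℝ) else 0))) μ := by
    refine bdd_integrable μ ((measurable_const.sub hmuY).mul (hmB.sub hmE)) (M := 2) ?_
    intro ω
    rw [abs_mul]
    calc |t0 - uY ω| * |(if t0 ≤ h (v ω) then (1 : ℝ) else 0) - (if t0 ≤ uY ω then (1 : ℝ) else 0)|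
        ≤ 2 * 1 := by
          refine mul_le_mul (ht0u ω) ?_ (abs_nonneg _) (by norm_num)
          split_ifs <;> norm_num
      _ = 2 := by norm_num
  -- reduce indicator values to if-expressions
  have hCind : ∀ ω, C.indicator (fun _ => (1 : ℝ)) (v ω) =
      if t0 ≤ v ω ∧ h (v ω) < t0 then 1 else 0 := by
    intro ω
    have hz := hv ω; rw [mem_Icc] at hz
    by_cases hc : t0 ≤ v ω ∧ h (v ω) < t0
    · rw [if_pos hc, indicator_apply, if_pos]
      exact ⟨hc, mem_Icc.mpr hz⟩
    · rw [if_neg hc, indicator_apply, if_neg]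
      rintro ⟨hc', _⟩; exact hc hc'
  have hDind : ∀ ω, D.indicator (fun _ => (1 : ℝ)) (v ω) =
      if v ω < t0 ∧ t0 ≤ h (v ω) then 1 else 0 := by
    intro ω
    have hz := hv ω; rw [mem_Icc] at hz
    by_cases hc : v ω < t0 ∧ t0 ≤ h (v ω)
    · rw [if_pos hc, indicator_apply, if_pos]
      exact ⟨hc, mem_Icc.mpr hz⟩
    · rw [if_neg hc, indicator_apply, if_neg]
      rintro ⟨hc', _⟩; exact hc hc'
  have hintC : Integrable (fun ω => (v ω - uY ω) * C.indicator (fun _ => (1 : ℝ)) (v ω)) μ := by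
    refine bdd_integrable μ ((hmv.sub hmuY).mul
      ((measurable_const.indicator hCm).comp hmv)) (M := 2) ?_
    intro ω
    have h2 := huY ω; have h3 := hv ω; rw [mem_Icc] at h2 h3
    rw [abs_mul]
    calc |v ω - uY ω| * |C.indicator (fun _ => (1 : ℝ)) (v ω)|
        ≤ 2 * 1 := by
          refine mul_le_mul ?_ ?_ (abs_nonneg _) (by norm_num)
          · rw [abs_le]; constructor <;> linarith [h2.1, h2.2, h3.1, h3.2]
          · rw [hCind ω]; split_ifs <;> norm_num
      _ = 2 := by norm_num
  have hintD : Integrable (fun ω => (uY ω - v ω) * D.indicator (fun _ => (1 : ℝ)) (v ω)) μ := by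
    refine bdd_integrable μ ((hmuY.sub hmv).mul
      ((measurable_const.indicator hDm).comp hmv)) (M := 2) ?_
    intro ω
    have h2 := huY ω; have h3 := hv ω; rw [mem_Icc] at h2 h3
    rw [abs_mul]
    calc |uY ω - v ω| * |D.indicator (fun _ => (1 : ℝ)) (v ω)|
        ≤ 2 * 1 := by
          refine mul_le_mul ?_ ?_ (abs_nonneg _) (by norm_num)
          · rw [abs_le]; constructor <;> linarith [h2.1, h2.2, h3.1, h3.2]
          · rw [hDind ω]; split_ifs <;> norm_num
      _ = 2 := by norm_num
  -- step 1: combine the two integrals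
  rw [← integral_sub hint1 hint2]
  -- step 2: bound the combined integrand pointwise
  have hstep : ∫ ω, ((t0 - uY ω) * ((if t0 ≤ v ω then (1 : ℝ) else 0) -
        (if t0 ≤ uY ω then (1 : ℝ) else 0)) -
      (t0 - uY ω) * ((if t0 ≤ h (v ω) then (1 : ℝ) else 0) -
        (if t0 ≤ uY ω then (1 : ℝ) else 0))) ∂μ
      ≤ ∫ ω, ((v ω - uY ω) * C.indicator (fun _ => (1 : ℝ)) (v ω) +
          (uY ω - v ω) * D.indicator (fun _ => (1 : ℝ)) (v ω)) ∂μ := by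
    refine integral_mono (hint1.sub hint2) (hintC.add hintD) ?_
    intro ω
    dsimp only
    rw [hCind ω, hDind ω]
    rcases le_or_gt t0 (v ω) with h1 | h1 <;> rcases le_or_gt t0 (h (v ω)) with h2 | h2
    · have hn1 : ¬(t0 ≤ v ω ∧ h (v ω) < t0) := fun hc => absurd h2 (not_le.mpr hc.2)
      have hn2 : ¬(v ω < t0 ∧ t0 ≤ h (v ω)) := fun hc => absurd h1 (not_le.mpr hc.1)
      simp only [if_pos h1, if_pos h2, if_neg hn1, if_neg hn2]
      linarith
    · have hp1 : t0 ≤ v ω ∧ h (v ω) < t0 := ⟨h1, h2⟩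
      have hn2 : ¬(v ω < t0 ∧ t0 ≤ h (v ω)) := fun hc => absurd h1 (not_le.mpr hc.1)
      simp only [if_pos h1, if_neg (not_le.mpr h2), if_pos hp1, if_neg hn2]
      linarith
    · have hn1 : ¬(t0 ≤ v ω ∧ h (v ω) < t0) := fun hc => absurd h1 (not_lt.mpr hc.1)
      have hp2 : v ω < t0 ∧ t0 ≤ h (v ω) := ⟨h1, h2⟩
      simp only [if_neg (not_le.mpr h1), if_pos h2, if_neg hn1, if_pos hp2]
      linarith
    · have hn1 : ¬(t0 ≤ v ω ∧ h (v ω) < t0) := fun hc => absurd h1 (not_lt.mpr hc.1)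
      have hn2 : ¬(v ω < t0 ∧ t0 ≤ h (v ω)) := fun hc => absurd h2 (not_lt.mpr hc.2)
      simp only [if_neg (not_le.mpr h1), if_neg (not_le.mpr h2), if_neg hn1, if_neg hn2]
      linarith
  refine le_trans hstep ?_
  -- step 3: split and bound by calibration error
  rw [integral_add hintC hintD]
  have hnegC : ∫ ω, (v ω - uY ω) * C.indicator (fun _ => (1 : ℝ)) (v ω) ∂μ =
      -∫ ω, (uY ω - v ω) * C.indicator (fun _ => (1 : ℝ)) (v ω) ∂μ := by
    rw [← integral_neg]
    exact integral_congr_ae (Filter.Eventually.of_forall fun ω => by ring)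
  rw [hnegC]
  have h1 : -∫ ω, (uY ω - v ω) * C.indicator (fun _ => (1 : ℝ)) (v ω) ∂μ ≤ UC :=
    le_trans (neg_le_abs _) keyC
  have h2 : ∫ ω, (uY ω - v ω) * D.indicator (fun _ => (1 : ℝ)) (v ω) ∂μ ≤ UC :=
    le_trans (le_abs_self _) keyD
  linarith
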